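/- The function s(s−1)ξ(s) (which extends to an entire function of s) is of order 1: for every ε > 0 there exists C > 0 such that for every complex s with s ∉ {0,1}, ‖s (s−1) ξ(s)‖ ≤ C · exp(‖s‖^{1+ε}). -/

import Mathlib

noncomputable section XiOrderOne

open MeasureTheory Set Real Filter Complex HurwitzZeta

private lemma aux_pow_le_fact_mul_exp {x : ℝ} (hx : 0 ≤ x) (n : ℕ) :
    x ^ n ≤ (n.factorial : ℝ) * Real.exp x := by
  have h3 : (0:ℝ) < n.factorial := by positivity
  have h2 : x ^ n / (n.factorial : ℝ) ≤ ∑ i ∈ Finset.range (n+1), x ^ i / (i.factorial : ℝ) :=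
    Finset.single_le_sum (f := fun i => x ^ i / (i.factorial : ℝ)) (fun i _ => by positivity)
      (Finset.self_mem_range_succ n)
  have h := (div_le_iff₀ h3).mp (h2.trans (Real.sum_le_exp_of_nonneg hx _))
  linarith [h]

private lemma aux_exp_neg_le' {x : ℝ} (hx : 0 < x) (n : ℕ) :
    Real.exp (-x) ≤ (n.factorial : ℝ) / x ^ n := by
  rw [le_div_iff₀ (by positivity), Real.exp_neg]
  have h := aux_pow_le_fact_mul_exp hx.le n
  rw [inv_mul_le_iff₀ (Real.exp_pos x)]
  linarith [h]

private lemma aux_kernel_bound : ∃ C p : ℝ, 0 < C ∧ 0 < p ∧ p ≤ 1 ∧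
    ∀ t : ℝ, 1 ≤ t → |evenKernel 0 t - 1| ≤ C * Real.exp (-p * t) := by
  obtain ⟨p₀, hp₀, hO⟩ := isBigO_atTop_evenKernel_sub (0 : UnitAddCircle)
  rw [if_pos rfl] at hO
  obtain ⟨C₁, hC₁⟩ := hO.bound
  obtain ⟨T₀, hT⟩ := eventually_atTop.mp hC₁
  set T : ℝ := max T₀ 1 with hTdef
  set p : ℝ := min p₀ 1 with hpdef
  have hp : 0 < p := lt_min hp₀ one_pos
  have hp1 : p ≤ 1 := min_le_right _ _
  have hsub : Icc (1:ℝ) T ⊆ Ioi 0 := fun x hx => lt_of_lt_of_le one_pos hx.1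
  have hcont : ContinuousOn (fun t => evenKernel 0 t - 1) (Icc 1 T) :=
    ((continuousOn_evenKernel 0).mono hsub).sub continuousOn_const
  obtain ⟨M, hM⟩ := isCompact_Icc.exists_bound_of_continuousOn hcont
  set C : ℝ := max 1 (max (max C₁ 0) (max M 0 * Real.exp (p * T))) with hCdef
  have hC0 : 0 < C := lt_of_lt_of_le one_pos (le_max_left _ _)
  refine ⟨C, p, hC0, hp, hp1, fun t ht => ?_⟩
  rcases le_or_gt T t with htT | htT
  · have h1 := hT t (le_trans (le_max_left _ _) htT)
    rw [Real.norm_eq_abs, Real.norm_eq_abs, Real.abs_exp] at h1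
    calc |evenKernel 0 t - 1| ≤ C₁ * Real.exp (-p₀ * t) := h1
      _ ≤ C * Real.exp (-p * t) := by
          rcases le_or_gt C₁ 0 with h | h
          · have : C₁ * Real.exp (-p₀ * t) ≤ 0 :=
              mul_nonpos_of_nonpos_of_nonneg h (Real.exp_nonneg _)
            exact this.trans (by positivity)
          · have hle : Real.exp (-p₀ * t) ≤ Real.exp (-p * t) := by
              apply Real.exp_le_exp.mpr
              have ht0 : (0:ℝ) ≤ t := le_trans zero_le_one ht
              nlinarith [min_le_left p₀ 1]
            have hC₁C : C₁ ≤ C :=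
              le_trans (le_max_left C₁ 0) (le_trans (le_max_left _ _) (le_max_right _ _))
            exact mul_le_mul hC₁C hle (Real.exp_nonneg _) hC0.le
  · have hmem : t ∈ Icc (1:ℝ) T := ⟨ht, htT.le⟩
    have h1 : |evenKernel 0 t - 1| ≤ max M 0 := le_trans (hM t hmem) (le_max_left _ _)
    have h2 : max M 0 * Real.exp (p * T) ≤ C := le_trans (le_max_right _ _) (le_max_right _ _)
    calc |evenKernel 0 t - 1| ≤ max M 0 := h1
      _ = max M 0 * Real.exp (p * T) * Real.exp (-p * T) := by
          rw [mul_assoc, ← Real.exp_add]; simp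
      _ ≤ C * Real.exp (-p * t) := by
          apply mul_le_mul h2 (Real.exp_le_exp.mpr (by nlinarith [htT.le])) (Real.exp_nonneg _) hC0.le

private lemma aux_fm_top {t : ℝ} (ht : 1 < t) :
    (hurwitzEvenFEPair 0).f_modif t = ((evenKernel 0 t : ℝ) : ℂ) - 1 := by
  simp only [WeakFEPair.f_modif, hurwitzEvenFEPair, Pi.add_apply,
    indicator_of_mem (mem_Ioi.mpr ht), indicator_of_notMem (notMem_Ioo_of_ge ht.le),
    add_zero, Function.comp_apply, if_true]

private lemma aux_fm_bot {t : ℝ} (ht0 : 0 < t) (ht : t < 1) :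
    (hurwitzEvenFEPair 0).f_modif t
      = ((t ^ (-(1/2) : ℝ) : ℝ) : ℂ) * ((evenKernel 0 t⁻¹ - 1 : ℝ) : ℂ) := by
  have h1 : (hurwitzEvenFEPair 0).f_modif t
      = ((evenKernel 0 t : ℝ) : ℂ) - ((t ^ (-(1/2) : ℝ) : ℝ) : ℂ) := by
    simp only [WeakFEPair.f_modif, hurwitzEvenFEPair, Pi.add_apply,
      indicator_of_notMem (notMem_Ioi.mpr ht.le), indicator_of_mem (mem_Ioo.mpr ⟨ht0, ht⟩),
      zero_add, Function.comp_apply, one_mul, smul_eq_mul, mul_one]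
  have hfe := evenKernel_functional_equation (0 : UnitAddCircle) t
  rw [← evenKernel_eq_cosKernel_of_zero] at hfe
  have h2 : evenKernel 0 t = t ^ (-(1/2):ℝ) * evenKernel 0 t⁻¹ := by
    rw [hfe, Real.rpow_neg ht0.le]; simp [one_div]
  rw [h1, h2]
  push_cast
  ring

private lemma aux_fm_one : (hurwitzEvenFEPair 0).f_modif 1 = 0 := by
  simp [WeakFEPair.f_modif]

private lemma aux_lambda_bound
    (hkb : ∃ C p : ℝ, 0 < C ∧ 0 < p ∧ p ≤ 1 ∧
      ∀ t : ℝ, 1 ≤ t → |evenKernel 0 t - 1| ≤ C * Real.exp (-p * t))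
    (hfm_one : (hurwitzEvenFEPair 0).f_modif 1 = 0)
    (hfm_top : ∀ {t : ℝ}, 1 < t →
      (hurwitzEvenFEPair 0).f_modif t = ((evenKernel 0 t : ℝ) : ℂ) - 1)
    (hfm_bot : ∀ {t : ℝ}, 0 < t → t < 1 → (hurwitzEvenFEPair 0).f_modif t
      = ((t ^ (-(1/2) : ℝ) : ℝ) : ℂ) * ((evenKernel 0 t⁻¹ - 1 : ℝ) : ℂ)) :
    ∃ C q : ℝ, 0 < C ∧ 1 ≤ q ∧
    ∀ (z : ℂ) (n : ℕ), |z.re| + 2 ≤ (n : ℝ) →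
      ‖(hurwitzEvenFEPair 0).Λ₀ z‖ ≤ C * q ^ n * (n.factorial : ℝ) := by
  obtain ⟨C₀, p, hC₀, hp, hp1, hker⟩ := hkb
  have hq1 : (1:ℝ) ≤ 2 / p := by rw [le_div_iff₀ hp]; linarith
  refine ⟨C₀ * (1 + 2/p), 2/p, by positivity, hq1, fun z n hn => ?_⟩
  set σ := z.re with hσ
  have hσ1 : σ - 1 ≤ (n:ℝ) := by linarith [le_abs_self σ]
  have hσ2 : (0:ℝ) ≤ σ - 3/2 + n := by linarith [neg_abs_le σ]
  set F : ℝ → ℂ := fun t => (t:ℂ) ^ (z - 1) • (hurwitzEvenFEPair 0).f_modif t with hF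
  have hMel := (hurwitzEvenFEPair 0).isStrongFEPair_toStrongFEPair.hasMellin z
  have hInt : IntegrableOn F (Ioi 0) := hMel.1
  have hval : (hurwitzEvenFEPair 0).Λ₀ z = ∫ t in Ioi (0:ℝ), F t := rfl
  have hnorm : ∀ t : ℝ, 0 < t → ‖F t‖ = t ^ (σ - 1) * ‖(hurwitzEvenFEPair 0).f_modif t‖ := by
    intro t ht
    rw [hF, norm_smul, Complex.norm_cpow_eq_rpow_re_of_pos ht]
    norm_num
    exact Or.inl rfl
  set B₂ : ℝ := C₀ * (n.factorial : ℝ) * (1/p)^n with hB₂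
  set B₃ : ℝ := C₀ * (n.factorial : ℝ) * (2/p)^n with hB₃
  have hB₂nn : 0 ≤ B₂ := by positivity
  have hB₃nn : 0 ≤ B₃ := by positivity
  have hIoc_sub : Ioc (0:ℝ) 1 ⊆ Ioi 0 := fun x hx => hx.1
  have hIoi_sub : Ioi (1:ℝ) ⊆ Ioi 0 := Ioi_subset_Ioi zero_le_one
  have hsplit : (∫ t in Ioi (0:ℝ), F t) = (∫ t in Ioc 0 1, F t) + ∫ t in Ioi 1, F t := by
    rw [← setIntegral_union (Ioc_disjoint_Ioi le_rfl) measurableSet_Ioi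
      (hInt.mono_set hIoc_sub) (hInt.mono_set hIoi_sub), Ioc_union_Ioi_eq_Ioi zero_le_one]
  -- Ioc piece
  have hIoc : ‖∫ t in Ioc (0:ℝ) 1, F t‖ ≤ B₂ := by
    have hb : ∀ t ∈ Ioc (0:ℝ) 1, ‖F t‖ ≤ B₂ := by
      rintro t ⟨ht0, ht1⟩
      rcases eq_or_lt_of_le ht1 with heq | ht1'
      · rw [heq, hnorm 1 one_pos, hfm_one, norm_zero, mul_zero]; exact hB₂nn
      · rw [hnorm t ht0, hfm_bot ht0 ht1', norm_mul, Complex.norm_real, Complex.norm_real,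
          Real.norm_eq_abs, Real.norm_eq_abs, _root_.abs_of_nonneg (Real.rpow_nonneg ht0.le _)]
        have hti : (1:ℝ) ≤ t⁻¹ := (one_le_inv₀ ht0).mpr ht1'.le
        have hkk : |evenKernel 0 t⁻¹ - 1| ≤ C₀ * (n.factorial : ℝ) * t^n * (1/p)^n := by
          calc |evenKernel 0 t⁻¹ - 1| ≤ C₀ * Real.exp (-p * t⁻¹) := hker t⁻¹ hti
            _ ≤ C₀ * ((n.factorial : ℝ) / (p * t⁻¹)^n) := by
                rw [neg_mul]
                gcongr
                exact aux_exp_neg_le' (by positivity) n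
            _ = C₀ * (n.factorial : ℝ) * t^n * (1/p)^n := by
                rw [mul_pow, inv_pow]
                field_simp
                ring_nf
                rw [← mul_pow, mul_inv_cancel₀ hp.ne', one_pow]
        calc t ^ (σ - 1) * (t ^ (-(1/2):ℝ) * |evenKernel 0 t⁻¹ - 1|)
            ≤ t ^ (σ - 1) * (t ^ (-(1/2):ℝ) * (C₀ * (n.factorial : ℝ) * t^n * (1/p)^n)) := by
              gcongr
          _ = (t ^ (σ - 1) * t ^ (-(1/2):ℝ) * t ^ ((n:ℝ))) * B₂ := by
              rw [Real.rpow_natCast, hB₂]; ring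
          _ = t ^ (σ - 3/2 + n) * B₂ := by
              have hexp : σ - 1 + -(1/2) + (n:ℝ) = σ - 3/2 + n := by ring
              rw [← Real.rpow_add ht0, ← Real.rpow_add ht0, hexp]
          _ ≤ 1 * B₂ := by
              gcongr
              exact Real.rpow_le_one ht0.le ht1'.le hσ2
          _ = B₂ := one_mul _
    have := norm_setIntegral_le_of_norm_le_const (μ := volume) (s := Ioc (0:ℝ) 1)
      (by rw [Real.volume_Ioc]; exact ENNReal.ofReal_lt_top) hb
    simpa [Real.volume_Ioc] using this
  -- Ioi piece
  have hg_int : Integrable (fun t : ℝ => B₃ * Real.exp (-(p/2) * t)) (volume.restrict (Ioi 1)) :=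
    (exp_neg_integrableOn_Ioi 1 (by positivity : (0:ℝ) < p/2)).const_mul B₃
  have hIoi : ‖∫ t in Ioi (1:ℝ), F t‖ ≤ B₃ * (2/p) := by
    have hb : ∀ t ∈ Ioi (1:ℝ), ‖F t‖ ≤ B₃ * Real.exp (-(p/2) * t) := by
      rintro t (ht : 1 < t)
      have ht0 : (0:ℝ) < t := lt_trans one_pos ht
      rw [hnorm t ht0, hfm_top ht]
      have h1 : ‖((evenKernel 0 t : ℝ) : ℂ) - 1‖ = |evenKernel 0 t - 1| := by
        rw [show ((evenKernel 0 t : ℝ) : ℂ) - 1 = ((evenKernel 0 t - 1 : ℝ) : ℂ) by push_cast; ring,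
          Complex.norm_real, Real.norm_eq_abs]
      rw [h1]
      have h2 : t ^ (σ - 1) ≤ t ^ (n:ℕ) := by
        rw [← Real.rpow_natCast t n]
        exact Real.rpow_le_rpow_of_exponent_le ht.le hσ1
      have h3 : t ^ (n:ℕ) ≤ (n.factorial : ℝ) * (2/p)^n * Real.exp (p/2 * t) := by
        have h := aux_pow_le_fact_mul_exp (x := p/2 * t) (by positivity) n
        have heq : t ^ (n:ℕ) = (p/2 * t)^n * (2/p)^n := by
          rw [← mul_pow]
          congr 1
          field_simp
        rw [heq]
        calc (p/2 * t)^n * (2/p)^n ≤ ((n.factorial : ℝ) * Real.exp (p/2 * t)) * (2/p)^n := by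
              gcongr
          _ = (n.factorial : ℝ) * (2/p)^n * Real.exp (p/2 * t) := by ring
      calc t ^ (σ - 1) * |evenKernel 0 t - 1|
          ≤ ((n.factorial : ℝ) * (2/p)^n * Real.exp (p/2 * t)) * (C₀ * Real.exp (-p * t)) := by
            apply mul_le_mul (h2.trans h3) (hker t ht.le) (abs_nonneg _) (by positivity)
        _ = B₃ * (Real.exp (p/2 * t) * Real.exp (-p * t)) := by rw [hB₃]; ring
        _ = B₃ * Real.exp (-(p/2) * t) := by
            rw [← Real.exp_add]
            congr 1
            ring
    calc ‖∫ t in Ioi (1:ℝ), F t‖ ≤ ∫ t in Ioi (1:ℝ), B₃ * Real.exp (-(p/2) * t) := by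
          apply norm_integral_le_of_norm_le hg_int
          exact (ae_restrict_iff' measurableSet_Ioi).mpr (Eventually.of_forall hb)
      _ = B₃ * ∫ t in Ioi (1:ℝ), Real.exp (-(p/2) * t) := by rw [MeasureTheory.integral_const_mul]
      _ ≤ B₃ * (2/p) := by
          gcongr
          have hmono : (∫ t in Ioi (1:ℝ), Real.exp (-(p/2) * t))
              ≤ ∫ t in Ioi (0:ℝ), Real.exp (-(p/2) * t) := by
            apply setIntegral_mono_set (exp_neg_integrableOn_Ioi 0 (by positivity : (0:ℝ) < p/2))
              (Eventually.of_forall fun x => Real.exp_nonneg _)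
              (HasSubset.Subset.eventuallyLE (Ioi_subset_Ioi zero_le_one))
          refine hmono.trans ?_
          have := integral_exp_neg_mul_rpow one_pos (by positivity : (0:ℝ) < p/2)
          simp_rw [Real.rpow_one] at this
          rw [this, show (-1/1 : ℝ) = -1 by norm_num, Real.rpow_neg_one,
            show (1/1+1 : ℝ) = 2 by norm_num, Real.Gamma_two, mul_one, inv_div]
    -- end
  calc ‖(hurwitzEvenFEPair 0).Λ₀ z‖ = ‖(∫ t in Ioc (0:ℝ) 1, F t) + ∫ t in Ioi 1, F t‖ := by
        rw [hval, hsplit]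
    _ ≤ ‖∫ t in Ioc (0:ℝ) 1, F t‖ + ‖∫ t in Ioi (1:ℝ), F t‖ := norm_add_le _ _
    _ ≤ B₂ + B₃ * (2/p) := add_le_add hIoc hIoi
    _ ≤ B₃ + B₃ * (2/p) := by
        have h12 : (1:ℝ)/p ≤ 2/p := by gcongr <;> norm_num
        have hBB : B₂ ≤ B₃ := by
          rw [hB₂, hB₃]
          exact mul_le_mul_of_nonneg_left (pow_le_pow_left₀ (by positivity) h12 n) (by positivity)
        linarith
    _ = C₀ * (1 + 2/p) * (2/p)^n * (n.factorial : ℝ) := by rw [hB₃]; ring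

private lemma aux_G_bound
    (hl : ∃ C q : ℝ, 0 < C ∧ 1 ≤ q ∧ ∀ (z : ℂ) (n : ℕ), |z.re| + 2 ≤ (n:ℝ) →
      ‖(hurwitzEvenFEPair 0).Λ₀ z‖ ≤ C * q ^ n * (n.factorial : ℝ)) :
    ∃ A B : ℝ, 0 < A ∧ 0 < B ∧ ∀ s : ℂ,
      ‖s * (s - 1) * completedRiemannZeta₀ s + 1‖
        ≤ A * Real.exp (B * ((‖s‖+3) * Real.log (‖s‖+3))) := by
  obtain ⟨C, q, hC, hq, hbd⟩ := hl
  have hlogq : 0 ≤ Real.log q := Real.log_nonneg hq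
  refine ⟨C + 1, Real.log q + 3, by linarith, by linarith, fun s => ?_⟩
  set r : ℝ := ‖s‖ with hr
  have hr0 : 0 ≤ r := norm_nonneg s
  have hr3 : (1:ℝ) ≤ r + 3 := by linarith
  have hlog1 : (1:ℝ) ≤ Real.log (r+3) := by
    rw [← Real.log_exp 1]
    apply Real.log_le_log (Real.exp_pos 1)
    have := Real.exp_one_lt_d9
    linarith
  set X : ℝ := (r+3) * Real.log (r+3) with hX
  have hX0 : 0 ≤ X := mul_nonneg (by linarith) (by linarith)
  have hXge : r + 3 ≤ X := le_mul_of_one_le_right (by linarith) hlog1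
  set n : ℕ := ⌈r⌉₊ + 2 with hn
  have hn2 : (2:ℕ) ≤ n := by omega
  have hnr : (n:ℝ) ≤ r + 3 := by
    have h1 : (⌈r⌉₊ : ℝ) < r + 1 := Nat.ceil_lt_add_one hr0
    push_cast [hn]
    linarith
  have hζ : ‖completedRiemannZeta₀ s‖ ≤ C * q ^ n * (n.factorial : ℝ) := by
    have hz : |(s/2 : ℂ).re| + 2 ≤ (n:ℝ) := by
      have h1 : |(s/2 : ℂ).re| ≤ ‖(s/2 : ℂ)‖ := Complex.abs_re_le_norm _
      have h2 : ‖(s/2 : ℂ)‖ ≤ ‖s‖ := by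
        rw [norm_div]
        simp only [Complex.norm_ofNat]
        linarith [norm_nonneg s]
      have h3 : r ≤ (⌈r⌉₊ : ℝ) := Nat.le_ceil r
      push_cast [hn]
      linarith
    have h4 := hbd (s/2) n hz
    have h5 : completedRiemannZeta₀ s = (hurwitzEvenFEPair 0).Λ₀ (s/2) / 2 := by
      rw [completedRiemannZeta₀, completedHurwitzZetaEven₀]
    rw [h5, norm_div]
    have h6 : ‖(2:ℂ)‖ = 2 := by norm_num
    rw [h6]
    have h7 : (0:ℝ) ≤ C * q ^ n * (n.factorial : ℝ) := by positivity
    linarith [h4]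
  -- q^n * n! ≤ exp((log q + 1) * X)
  have hqn : (q:ℝ) ^ n ≤ Real.exp (Real.log q * X) := by
    have h1 : (q:ℝ) ^ n = Real.exp ((n:ℝ) * Real.log q) := by
      rw [← Real.log_pow, Real.exp_log (by positivity)]
    rw [h1, Real.exp_le_exp]
    calc (n:ℝ) * Real.log q ≤ (r+3) * Real.log q := by
          apply mul_le_mul_of_nonneg_right hnr hlogq
      _ ≤ X * Real.log q := by
          apply mul_le_mul_of_nonneg_right hXge hlogq
      _ = Real.log q * X := mul_comm _ _
  have hfact : (n.factorial : ℝ) ≤ Real.exp X := by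
    have h1 : (n.factorial : ℝ) ≤ (n:ℝ) ^ n := by
      exact_mod_cast Nat.factorial_le_pow n
    have h2 : (n:ℝ) ^ n = Real.exp ((n:ℝ) * Real.log n) := by
      rw [← Real.log_pow, Real.exp_log (by positivity)]
    have hn0 : (1:ℝ) ≤ (n:ℝ) := by exact_mod_cast Nat.one_le_iff_ne_zero.mpr (by omega)
    have h3 : Real.log (n:ℝ) ≤ Real.log (r+3) :=
      Real.log_le_log (by linarith) hnr
    have h4 : (0:ℝ) ≤ Real.log (n:ℝ) := Real.log_nonneg hn0
    refine h1.trans (h2.le.trans ?_)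
    rw [Real.exp_le_exp, hX]
    calc (n:ℝ) * Real.log n ≤ (r+3) * Real.log n := by
          apply mul_le_mul_of_nonneg_right hnr h4
      _ ≤ (r+3) * Real.log (r+3) := by
          apply mul_le_mul_of_nonneg_left h3 (by linarith)
  have hζ2 : ‖completedRiemannZeta₀ s‖ ≤ C * Real.exp ((Real.log q + 1) * X) := by
    calc ‖completedRiemannZeta₀ s‖ ≤ C * q ^ n * (n.factorial : ℝ) := hζ
      _ ≤ C * Real.exp (Real.log q * X) * Real.exp X := by
          apply mul_le_mul (mul_le_mul_of_nonneg_left hqn hC.le) hfact (by positivity) (by positivity)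
      _ = C * Real.exp ((Real.log q + 1) * X) := by
          rw [mul_assoc, ← Real.exp_add]
          ring_nf
  have hpoly : ‖s * (s - 1)‖ ≤ Real.exp (2 * X) := by
    calc ‖s * (s - 1)‖ = r * ‖s - 1‖ := by rw [norm_mul]
      _ ≤ r * (r + 1) := by
          apply mul_le_mul_of_nonneg_left _ hr0
          calc ‖s - 1‖ ≤ ‖s‖ + ‖(1:ℂ)‖ := norm_sub_le _ _
            _ = r + 1 := by rw [norm_one]
      _ ≤ (r+3)^2 := by nlinarith
      _ = Real.exp (2 * Real.log (r+3)) := by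
          rw [show (2:ℝ) * Real.log (r+3) = Real.log ((r+3)^2) by
            rw [Real.log_pow]; push_cast; ring]
          rw [Real.exp_log (by positivity)]
      _ ≤ Real.exp (2 * X) := by
          rw [Real.exp_le_exp]
          nlinarith
  calc ‖s * (s - 1) * completedRiemannZeta₀ s + 1‖
      ≤ ‖s * (s - 1) * completedRiemannZeta₀ s‖ + 1 := by
        refine (norm_add_le _ _).trans ?_
        simp
    _ = ‖s * (s - 1)‖ * ‖completedRiemannZeta₀ s‖ + 1 := by rw [norm_mul]
    _ ≤ Real.exp (2 * X) * (C * Real.exp ((Real.log q + 1) * X)) + 1 := by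
        gcongr
    _ = C * Real.exp ((Real.log q + 3) * X) + 1 := by
        rw [← mul_assoc, mul_comm (Real.exp (2*X)) C, mul_assoc, ← Real.exp_add]
        ring_nf
    _ ≤ (C + 1) * Real.exp ((Real.log q + 3) * X) := by
        have h1 : (1:ℝ) ≤ Real.exp ((Real.log q + 3) * X) := by
          rw [← Real.exp_zero, Real.exp_le_exp]
          positivity
        nlinarith

private lemma aux_eventual (ε B : ℝ) (hε : 0 < ε) (hB : 0 < B) :
    ∃ M : ℝ, 0 ≤ M ∧ ∀ r : ℝ, 0 ≤ r → B * ((r+3) * Real.log (r+3)) ≤ M + r ^ (1+ε) := by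
  set D : ℝ := (B * (2/ε)) * 2 ^ ((1:ℝ)+ε/2) with hD
  have hD0 : 0 < D := by positivity
  set D₁ : ℝ := max D 1 with hD₁
  have hD₁1 : (1:ℝ) ≤ D₁ := le_max_right _ _
  set R : ℝ := max 3 (D₁ ^ ((2:ℝ)/ε)) with hR
  have hR3 : (3:ℝ) ≤ R := le_max_left _ _
  have hR0 : (0:ℝ) ≤ R := by linarith
  refine ⟨B * ((R+3) * Real.log (R+3)), mul_nonneg hB.le (mul_nonneg (by linarith) (Real.log_nonneg (by linarith))), fun r hr => ?_⟩
  rcases le_or_gt r R with hrR | hrR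
  · have h1 : (r+3) * Real.log (r+3) ≤ (R+3) * Real.log (R+3) := by
      apply mul_le_mul (by linarith) (Real.log_le_log (by linarith) (by linarith))
        (Real.log_nonneg (by linarith)) (by linarith)
    have h2 : (0:ℝ) ≤ r ^ (1+ε) := Real.rpow_nonneg hr _
    nlinarith
  · have hr3 : (3:ℝ) ≤ r := le_trans hR3 hrR.le
    have hr0 : (0:ℝ) < r := by linarith
    have h1 : Real.log (r+3) ≤ (r+3) ^ (ε/2) / (ε/2) :=
      Real.log_le_rpow_div (by linarith) (by positivity)
    have h2 : (r+3:ℝ) ^ ((1:ℝ)+ε/2) ≤ (2*r) ^ ((1:ℝ)+ε/2) := by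
      apply Real.rpow_le_rpow (by linarith) (by linarith) (by positivity)
    have h3 : ((2:ℝ)*r) ^ ((1:ℝ)+ε/2) = 2 ^ ((1:ℝ)+ε/2) * r ^ ((1:ℝ)+ε/2) :=
      Real.mul_rpow (by norm_num) hr0.le
    have h4 : B * ((r+3) * Real.log (r+3)) ≤ D * r ^ ((1:ℝ)+ε/2) := by
      calc B * ((r+3) * Real.log (r+3))
          ≤ B * ((r+3) * ((r+3) ^ (ε/2) / (ε/2))) := by
            apply mul_le_mul_of_nonneg_left _ hB.le
            apply mul_le_mul_of_nonneg_left h1 (by linarith)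
        _ = (B * (2/ε)) * ((r+3) * (r+3) ^ (ε/2)) := by
            field_simp
        _ = (B * (2/ε)) * (r+3) ^ ((1:ℝ)+ε/2) := by
            rw [Real.rpow_add (by linarith : (0:ℝ) < r+3), Real.rpow_one]
        _ ≤ (B * (2/ε)) * (2 ^ ((1:ℝ)+ε/2) * r ^ ((1:ℝ)+ε/2)) := by
            rw [← h3]
            apply mul_le_mul_of_nonneg_left h2 (by positivity)
        _ = D * r ^ ((1:ℝ)+ε/2) := by rw [hD]; ring
    have h5 : D ≤ r ^ (ε/2) := by
      have h6 : D₁ ^ ((2:ℝ)/ε) ≤ r := le_trans (le_max_right _ _) hrR.le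
      have h7 : (D₁ ^ ((2:ℝ)/ε)) ^ (ε/2) ≤ r ^ (ε/2) :=
        Real.rpow_le_rpow (by positivity) h6 (by positivity)
      rw [← Real.rpow_mul (by linarith : (0:ℝ) ≤ D₁)] at h7
      have h8 : (2:ℝ)/ε * (ε/2) = 1 := by field_simp
      rw [h8, Real.rpow_one] at h7
      exact le_trans (le_max_left _ _) h7
    have h9 : r ^ ((1:ℝ)+ε) = r ^ (ε/2) * r ^ ((1:ℝ)+ε/2) := by
      rw [← Real.rpow_add hr0]
      ring_nf
    calc B * ((r+3) * Real.log (r+3)) ≤ D * r ^ ((1:ℝ)+ε/2) := h4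
      _ ≤ r ^ (ε/2) * r ^ ((1:ℝ)+ε/2) := by
          apply mul_le_mul_of_nonneg_right h5 (by positivity)
      _ = r ^ ((1:ℝ)+ε) := h9.symm
      _ ≤ B * ((R+3) * Real.log (R+3)) + r ^ (1+ε) := by
          have : (0:ℝ) ≤ B * ((R+3) * Real.log (R+3)) := by
            have := Real.log_nonneg (by linarith : (1:ℝ) ≤ R+3)
            positivity
          linarith

/-- The entire function `s(s−1)ξ(s)` is of order 1: for every `ε > 0` there is `C > 0`
with `‖s(s−1)ξ(s)‖ ≤ C · exp(‖s‖^{1+ε})` for all `s ∉ {0,1}`. -/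
theorem xi_of_order_one (ε : ℝ) (hε : 0 < ε) :
    ∃ C > 0, ∀ s : ℂ, s ≠ 0 → s ≠ 1 →
      ‖s * (s - 1) * completedRiemannZeta s‖ ≤ C * Real.exp (‖s‖ ^ (1 + ε)) := by
  obtain ⟨A, B, hA, hB, hGb⟩ := aux_G_bound (aux_lambda_bound aux_kernel_bound aux_fm_one
    (fun {t} ht => aux_fm_top ht) (fun {t} h1 h2 => aux_fm_bot h1 h2))
  obtain ⟨M, hM0, hMb⟩ := aux_eventual ε B hε hB
  refine ⟨A * Real.exp M, by positivity, fun s hs0 hs1 => ?_⟩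
  have heq : s * (s - 1) * completedRiemannZeta s
      = s * (s - 1) * completedRiemannZeta₀ s + 1 := by
    rw [completedRiemannZeta_eq]
    have h1 : (1:ℂ) - s ≠ 0 := sub_ne_zero.mpr (Ne.symm hs1)
    field_simp
    ring
  rw [heq]
  calc ‖s * (s - 1) * completedRiemannZeta₀ s + 1‖
      ≤ A * Real.exp (B * ((‖s‖+3) * Real.log (‖s‖+3))) := hGb s
    _ ≤ A * Real.exp (M + ‖s‖ ^ (1+ε)) := by
        apply mul_le_mul_of_nonneg_left _ hA.le
        rw [Real.exp_le_exp]
        exact hMb ‖s‖ (norm_nonneg s)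
    _ = A * Real.exp M * Real.exp (‖s‖ ^ (1+ε)) := by
        rw [Real.exp_add, mul_assoc]

end XiOrderOne
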